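/- arXiv:2504.16618 — 3 statements merged into one kernel-verified Lean document; each statement's English description precedes it below -/
import Mathlib

section
/- For every natural number n ≥ 1, ∑_{k=1}^{n+1} (-1)^{k-1} ([k-1] + [k]) ( [2n choose n-k+1]_q + [2n choose n-k]_q ) = 0 in ℚ(q), where by convention [2n choose j]_q = 0 whenever j < 0. -/
noncomputable def q : RatFunc ℚ := RatFunc.X

noncomputable def qint (k : ℤ) : RatFunc ℚ := (q ^ k - q ^ (-k)) / (q - q⁻¹)

noncomputable def qfact (m : ℕ) : RatFunc ℚ := ∏ i ∈ Finset.range m, qint (i + 1)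

noncomputable def qbinom (m : ℕ) (k : ℤ) : RatFunc ℚ :=
  if 0 ≤ k ∧ k ≤ (m : ℤ) then qfact m / (qfact k.toNat * qfact (m - k.toNat)) else 0

lemma q_ne_zero : q ≠ 0 := RatFunc.X_ne_zero

lemma q_pow_ne_one (m : ℕ) (hm : m ≠ 0) : q ^ m ≠ 1 := by
  intro h
  have h2 : (Polynomial.X ^ m : Polynomial ℚ) = 1 := by
    apply RatFunc.algebraMap_injective ℚ
    rw [map_pow, map_one, RatFunc.algebraMap_X]
    exact h
  have := congrArg Polynomial.natDegree h2
  simp [Polynomial.natDegree_X_pow] at this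
  exact hm this

lemma d_ne_zero : q - q⁻¹ ≠ 0 := by
  intro h
  have hq : q = q⁻¹ := sub_eq_zero.mp h
  have : q ^ 2 = 1 := by
    rw [pow_two]; nth_rewrite 2 [hq]; exact mul_inv_cancel₀ q_ne_zero
  exact q_pow_ne_one 2 (by norm_num) this

lemma qint_zero : qint 0 = 0 := by simp [qint]

lemma qint_natCast_ne_zero (k : ℕ) (hk : k ≠ 0) : qint k ≠ 0 := by
  unfold qint
  apply div_ne_zero _ d_ne_zero
  rw [zpow_neg, zpow_natCast]
  intro h
  have hpk : q ^ k ≠ 0 := pow_ne_zero _ q_ne_zero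
  have hh : q ^ k = (q ^ k)⁻¹ := sub_eq_zero.mp h
  have h2 : q ^ (2 * k) = 1 := by
    rw [two_mul, pow_add]; nth_rewrite 2 [hh]; exact mul_inv_cancel₀ hpk
  exact q_pow_ne_one (2 * k) (by omega) h2

lemma qint_id1 (a b : ℤ) :
    qint a * qint b - qint (a + 1) * qint (b - 1) = qint (a - b + 1) := by
  have hq : q ≠ 0 := q_ne_zero
  have hd : q - q⁻¹ ≠ 0 := d_ne_zero
  have hA : q ^ a ≠ 0 := zpow_ne_zero _ hq
  have hB : q ^ b ≠ 0 := zpow_ne_zero _ hq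
  have hadd : ∀ x y : ℤ, q ^ (x + y) = q ^ x * q ^ y := fun x y => zpow_add₀ hq x y
  have hneg : ∀ x : ℤ, q ^ (-x) = (q ^ x)⁻¹ := fun x => zpow_neg q x
  have key : (q^a - q^(-a)) * (q^b - q^(-b)) - (q^(a+1) - q^(-(a+1))) * (q^(b-1) - q^(-(b-1)))
      = (q^(a-b+1) - q^(-(a-b+1))) * (q - q⁻¹) := by
    rw [show -(a+1) = -a + -1 by ring, show -(b-1) = -b + 1 by ring,
      show (b-1 : ℤ) = b + -1 by ring, show a - b + 1 = a + -b + 1 by ring,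
      show -(a + -b + 1) = -a + (b + -1) by ring]
    rw [hadd, hadd, hadd, hadd, hadd (a + -b), hadd a (-b), hadd, hadd b,
      hneg a, hneg b, hneg 1]
    rw [zpow_one]
    field_simp
    ring
  unfold qint
  rw [div_mul_div_comm, div_mul_div_comm, div_sub_div_same, key,
    mul_div_mul_right _ _ hd]

lemma qint_id2 (a b : ℤ) :
    qint (a + 1) * qint b - qint a * qint (b - 1) = qint (a + b) := by
  have hq : q ≠ 0 := q_ne_zero
  have hd : q - q⁻¹ ≠ 0 := d_ne_zero
  have hA : q ^ a ≠ 0 := zpow_ne_zero _ hq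
  have hB : q ^ b ≠ 0 := zpow_ne_zero _ hq
  have hadd : ∀ x y : ℤ, q ^ (x + y) = q ^ x * q ^ y := fun x y => zpow_add₀ hq x y
  have hneg : ∀ x : ℤ, q ^ (-x) = (q ^ x)⁻¹ := fun x => zpow_neg q x
  have key : (q^(a+1) - q^(-(a+1))) * (q^b - q^(-b)) - (q^a - q^(-a)) * (q^(b-1) - q^(-(b-1)))
      = (q^(a+b) - q^(-(a+b))) * (q - q⁻¹) := by
    rw [show -(a+1) = -a + -1 by ring, show -(b-1) = -b + 1 by ring,
      show (b-1 : ℤ) = b + -1 by ring, show -(a + b) = -a + -b by ring]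
    rw [hadd, hadd, hadd, hadd, hadd a b, hadd (-a) (-b),
      hneg a, hneg b, hneg 1]
    rw [zpow_one]
    field_simp
    ring
  unfold qint
  rw [div_mul_div_comm, div_mul_div_comm, div_sub_div_same, key,
    mul_div_mul_right _ _ hd]

lemma qfact_succ (m : ℕ) : qfact (m + 1) = qfact m * qint (m + 1) := by
  unfold qfact
  rw [Finset.prod_range_succ]

lemma qfact_ne_zero (m : ℕ) : qfact m ≠ 0 := by
  unfold qfact
  rw [Finset.prod_ne_zero_iff]
  intro i _
  have : ((i : ℤ) + 1) = ((i + 1 : ℕ) : ℤ) := by push_cast; ring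
  rw [this]
  exact qint_natCast_ne_zero (i + 1) (by omega)

lemma qbinom_neg (m : ℕ) (j : ℤ) (h : j < 0) : qbinom m j = 0 := by
  unfold qbinom
  rw [if_neg]
  rintro ⟨h0, -⟩; omega

lemma ratio (m : ℕ) (j : ℤ) (h0 : 0 ≤ j) (h1 : j ≤ (m : ℤ)) :
    qint j * qbinom m j = qint ((m : ℤ) + 1 - j) * qbinom m (j - 1) := by
  rcases eq_or_lt_of_le h0 with h | h
  · rw [← h, qint_zero, qbinom_neg m (0 - 1) (by norm_num)]
    ring
  · obtain ⟨jn, rfl⟩ := Int.eq_ofNat_of_zero_le h0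
    have hjn : 1 ≤ jn := by exact_mod_cast h
    have hjm : jn ≤ m := by exact_mod_cast h1
    unfold qbinom
    rw [if_pos ⟨h0, h1⟩, if_pos ⟨by omega, by omega⟩]
    have e1 : ((jn : ℤ)).toNat = jn := by omega
    have e2 : ((jn : ℤ) - 1).toNat = jn - 1 := by omega
    rw [e1, e2]
    have f1 : qfact jn = qfact (jn - 1) * qint jn := by
      conv_lhs => rw [show jn = (jn - 1) + 1 by omega, qfact_succ]
      congr 2
      push_cast [Nat.cast_sub hjn]
      ring
    have f2 : qfact (m - (jn - 1)) = qfact (m - jn) * qint ((m : ℤ) + 1 - jn) := by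
      rw [show m - (jn - 1) = (m - jn) + 1 by omega, qfact_succ]
      congr 2
      push_cast [Nat.cast_sub hjm]
      ring
    rw [f1, f2]
    have h1 : qfact (jn - 1) ≠ 0 := qfact_ne_zero _
    have h2 : qfact (m - jn) ≠ 0 := qfact_ne_zero _
    have h3 : qint (jn : ℤ) ≠ 0 := qint_natCast_ne_zero jn (by omega)
    have h4 : qint ((m : ℤ) + 1 - jn) ≠ 0 := by
      have : ((m : ℤ) + 1 - jn) = ((m + 1 - jn : ℕ) : ℤ) := by omega
      rw [this]
      exact qint_natCast_ne_zero _ (by omega)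
    field_simp

lemma step (n k : ℕ) (hk1 : 1 ≤ k) (hk2 : k ≤ n + 1) :
    qint n * ((qint ((k : ℤ) - 1) + qint k) *
        (qbinom (2 * n) ((n : ℤ) - k + 1) + qbinom (2 * n) ((n : ℤ) - k)))
      = (qint n + qint ((n : ℤ) + 1)) *
        (qint ((k : ℤ) - 1) * qbinom (2 * n) ((n : ℤ) - k + 1) +
          qint k * qbinom (2 * n) ((n : ℤ) - k)) := by
  have hr := ratio (2 * n) ((n : ℤ) + 1 - k) (by omega) (by push_cast; omega)
  rw [show (n : ℤ) + 1 - k = (n : ℤ) - k + 1 by ring] at hr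
  rw [show ((2 * n : ℕ) : ℤ) + 1 - ((n : ℤ) - k + 1) = (n : ℤ) + k by push_cast; ring] at hr
  rw [show (n : ℤ) - k + 1 - 1 = (n : ℤ) - k by ring] at hr
  have id1 := qint_id1 (n : ℤ) (k : ℤ)
  have id2 := qint_id2 (n : ℤ) (k : ℤ)
  linear_combination qbinom (2 * n) ((n : ℤ) - k + 1) * id1
    - qbinom (2 * n) ((n : ℤ) - k) * id2 + hr

/-- `∑_{k=1}^{n+1} (-1)^{k-1}([k-1]+[k])([2n choose n-k+1]_q + [2n choose n-k]_q) = 0`,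
where quantum binomial coefficients with negative lower index vanish. -/
theorem qbinom_eigenvalue_sum (n : ℕ) (hn : 1 ≤ n) :
    ∑ k ∈ Finset.Icc 1 (n + 1),
        (-1 : RatFunc ℚ) ^ (k - 1) * (qint ((k : ℤ) - 1) + qint (k : ℤ)) *
          (qbinom (2 * n) ((n : ℤ) - (k : ℤ) + 1) + qbinom (2 * n) ((n : ℤ) - (k : ℤ))) = 0 := by
  have hqn : qint (n : ℤ) ≠ 0 := qint_natCast_ne_zero n (by omega)
  set G : ℕ → RatFunc ℚ := fun i =>
    (qint (n : ℤ) + qint ((n : ℤ) + 1)) *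
      ((-1 : RatFunc ℚ) ^ i * qint (i : ℤ) * qbinom (2 * n) ((n : ℤ) - (i : ℤ))) with hG
  have key : qint (n : ℤ) * (∑ k ∈ Finset.Icc 1 (n + 1),
      (-1 : RatFunc ℚ) ^ (k - 1) * (qint ((k : ℤ) - 1) + qint (k : ℤ)) *
        (qbinom (2 * n) ((n : ℤ) - (k : ℤ) + 1) + qbinom (2 * n) ((n : ℤ) - (k : ℤ)))) = 0 := by
    rw [Finset.mul_sum]
    have hterm : ∀ k ∈ Finset.Icc 1 (n + 1),
        qint (n : ℤ) * ((-1 : RatFunc ℚ) ^ (k - 1) * (qint ((k : ℤ) - 1) + qint (k : ℤ)) *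
          (qbinom (2 * n) ((n : ℤ) - (k : ℤ) + 1) + qbinom (2 * n) ((n : ℤ) - (k : ℤ))))
        = G (k - 1) - G k := by
      intro k hk
      simp only [Finset.mem_Icc] at hk
      obtain ⟨hk1, hk2⟩ := hk
      have hstep := step n k hk1 hk2
      rw [hG]
      simp only
      rw [show ((k - 1 : ℕ) : ℤ) = (k : ℤ) - 1 by omega]
      rw [show (n : ℤ) - ((k : ℤ) - 1) = (n : ℤ) - k + 1 by ring]
      rw [show (-1 : RatFunc ℚ) ^ k = -(-1 : RatFunc ℚ) ^ (k - 1) by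
        conv_lhs => rw [show k = (k - 1) + 1 by omega]
        rw [pow_succ]; ring]
      linear_combination (-1 : RatFunc ℚ) ^ (k - 1) * hstep
    rw [Finset.sum_congr rfl hterm]
    have himg : Finset.Icc 1 (n + 1) = Finset.image (fun i => i + 1) (Finset.range (n + 1)) := by
      ext x
      simp only [Finset.mem_Icc, Finset.mem_image, Finset.mem_range]
      constructor
      · rintro ⟨h1, h2⟩; exact ⟨x - 1, by omega, by omega⟩
      · rintro ⟨a, ha, rfl⟩; omega
    rw [himg, Finset.sum_image (by intro a _ b _ h; simp only at h; omega)]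
    simp only [Nat.add_sub_cancel]
    rw [Finset.sum_range_sub' G (n + 1)]
    have g0 : G 0 = 0 := by
      rw [hG]; simp [qint_zero]
    have gn : G (n + 1) = 0 := by
      rw [hG]
      simp only
      rw [qbinom_neg (2 * n) _ (by push_cast; omega)]
      ring
    rw [g0, gn, sub_zero]
  rcases mul_eq_zero.mp key with h | h
  · exact absurd h hqn
  · exact h
end

section
/- Fix natural numbers n and N with N ∈ {2n, 2n+1}, and rational numbers ρ_i for 1 ≤ i ≤ n defined by ρ_i = i - 1 if N = 2n and ρ_i = i - 1/2 if N = 2n+1. For subsets I, J of {1,…,n} define Φ(I, J) = 0 if J ≠ I^∁, and Φ(I, I^∁) = (-1)^{n(N+1)|I|} ∏_{i∈I} (-1)^i q^{-ρ_i} in ℚ(q^{1/2}). For 1 ≤ i ≤ n define the creation operator on subsets: Ψ_i^†(I) = 0 if i ∈ I, and otherwise contributes the scalar (-1)^{|{j∈I : j>i}|} times the subset I ∪ {i}. Then for all I, J ⊆ {1,…,n} and all 1 ≤ i ≤ n with i ∉ I and i ∉ J, the following identity of scalars holds: (-1)^{|{j∈I : j>i}|} Φ(I ∪ {i}, J) =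 (-1)^{Nn} q^{-ρ_i} (-1)^{|{j∈J : j>i}|} Φ(I, J ∪ {i}). -/
/-- `tq` represents `q^{1/2}`, the generator of `ℚ(q^{1/2})`; thus `q = tq ^ 2`. -/
noncomputable def tq : RatFunc ℚ := RatFunc.X

/-- Twice the quantity `ρ_i`: `2ρ_i = 2i - 2` in type `D` (`N = 2n`) and
`2ρ_i = 2i - 1` in type `B` (`N = 2n + 1`), so that `q^{ρ_i} = tq ^ (rho2 n N i)`. -/
def rho2 (n N : ℕ) (i : ℕ) : ℤ := if N = 2 * n then 2 * (i : ℤ) - 2 else 2 * (i : ℤ) - 1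

/-- The bilinear form on the spin module, in the basis indexed by subsets of `{1,…,n}`:
`Φ(I, J) = 0` unless `J = I^∁`, and `Φ(I, I^∁) = (-1)^{n(N+1)|I|} ∏_{i∈I} (-1)^i q^{-ρ_i}`. -/
noncomputable def PhiS (n N : ℕ) (I J : Finset ℕ) : RatFunc ℚ :=
  if J = Finset.Icc 1 n \ I then
    (-1 : RatFunc ℚ) ^ (n * (N + 1) * I.card) *
      ∏ i ∈ I, ((-1 : RatFunc ℚ) ^ i * tq ^ (-(rho2 n N i)))
  else 0

lemma neg_one_pow_mod (x y : ℕ) (h : x % 2 = y % 2) : (-1 : RatFunc ℚ)^x = (-1)^y := by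
  rw [← Nat.div_add_mod x 2, ← Nat.div_add_mod y 2, h, pow_add, pow_add, pow_mul, pow_mul]
  norm_num

/-- Invariance of the spin form under the Clifford creation operators: for `i ∉ I`, `i ∉ J`,
`(-1)^{|{j∈I : j>i}|} Φ(I ∪ {i}, J) = (-1)^{Nn} q^{-ρ_i} (-1)^{|{j∈J : j>i}|} Φ(I, J ∪ {i})`. -/
theorem spin_form_creation_invariance (n N : ℕ) (hN : N = 2 * n ∨ N = 2 * n + 1)
    (I J : Finset ℕ) (hI : I ⊆ Finset.Icc 1 n) (hJ : J ⊆ Finset.Icc 1 n)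
    (i : ℕ) (hi1 : 1 ≤ i) (hi2 : i ≤ n) (hiI : i ∉ I) (hiJ : i ∉ J) :
    (-1 : RatFunc ℚ) ^ (I.filter (fun j => i < j)).card * PhiS n N (insert i I) J =
      (-1 : RatFunc ℚ) ^ (N * n) * tq ^ (-(rho2 n N i)) *
        ((-1 : RatFunc ℚ) ^ (J.filter (fun j => i < j)).card * PhiS n N I (insert i J)) := by
  have hiIcc : i ∈ Finset.Icc 1 n := Finset.mem_Icc.mpr ⟨hi1, hi2⟩
  by_cases h : J = Finset.Icc 1 n \ insert i I
  · have h2 : insert i J = Finset.Icc 1 n \ I := by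
      subst h
      ext x
      simp only [Finset.mem_insert, Finset.mem_sdiff, Finset.mem_Icc] at *
      have hxI : x ∈ I → 1 ≤ x ∧ x ≤ n := fun hx => Finset.mem_Icc.mp (hI hx)
      constructor
      · rintro (rfl | ⟨hx, hxi⟩)
        · exact ⟨⟨hi1, hi2⟩, hiI⟩
        · exact ⟨hx, fun hxI' => hxi (Or.inr hxI')⟩
      · rintro ⟨hx, hxI'⟩
        by_cases hxi : x = i
        · exact Or.inl hxi
        · exact Or.inr ⟨hx, fun h' => h'.elim hxi hxI'⟩
    set a := (I.filter (fun j => i < j)).card with ha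
    set b := (J.filter (fun j => i < j)).card with hb
    set c := I.card with hc
    have hdisj : Disjoint I J := by
      rw [h]
      exact (Finset.sdiff_disjoint.mono_right (Finset.subset_insert i I)).symm
    have hun : I ∪ J = (Finset.Icc 1 n).erase i := by
      rw [h]
      ext x
      simp only [Finset.mem_union, Finset.mem_sdiff, Finset.mem_insert, Finset.mem_erase]
      have hxI : x ∈ I → x ∈ Finset.Icc 1 n := fun hx => hI hx
      have hxi : x ∈ I → x ≠ i := fun hx hxi => hiI (hxi ▸ hx)
      tauto
    have hab : a + b = n - i := by
      rw [ha, hb, ← Finset.card_union_of_disjoint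
        (Finset.disjoint_filter_filter hdisj), ← Finset.filter_union, hun]
      have : ((Finset.Icc 1 n).erase i).filter (fun j => i < j) = Finset.Icc (i+1) n := by
        ext x
        simp only [Finset.mem_filter, Finset.mem_erase, Finset.mem_Icc]
        omega
      rw [this, Nat.card_Icc]; omega
    rw [PhiS, if_pos h, PhiS, if_pos h2, Finset.prod_insert hiI,
      Finset.card_insert_of_notMem hiI]
    have key : (-1 : RatFunc ℚ)^(a + n*(N+1)*(c+1) + i) = (-1)^(N*n + b + n*(N+1)*c) := by
      apply neg_one_pow_mod
      rcases hN with rfl | rfl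
      · obtain ⟨A, hA⟩ : ∃ A, n * (2*n + 1) * (c + 1) = 2 * A + n*c + n :=
          ⟨n*n*(c+1), by ring⟩
        obtain ⟨B, hB⟩ : ∃ B, n * (2*n + 1) * c = 2 * B + n*c := ⟨n*n*c, by ring⟩
        obtain ⟨D, hD⟩ : ∃ D, 2*n*n = 2 * D := ⟨n*n, by ring⟩
        obtain ⟨C, hC⟩ : ∃ C, n * c = C := ⟨_, rfl⟩
        rw [hC] at hA hB
        rw [hA, hB, hD]
        omega
      · obtain ⟨A, hA⟩ : ∃ A, n * (2*n + 1 + 1) * (c + 1) = 2 * A := ⟨n*(n+1)*(c+1), by ring⟩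
        obtain ⟨B, hB⟩ : ∃ B, n * (2*n + 1 + 1) * c = 2 * B := ⟨n*(n+1)*c, by ring⟩
        obtain ⟨D, hD⟩ : ∃ D, (2*n+1)*n = 2 * D + n := ⟨n*n, by ring⟩
        rw [hA, hB, hD]
        omega
    calc (-1 : RatFunc ℚ) ^ a * ((-1 : RatFunc ℚ) ^ (n * (N + 1) * (c + 1)) *
          ((-1 : RatFunc ℚ) ^ i * tq ^ (-(rho2 n N i)) *
            ∏ j ∈ I, ((-1 : RatFunc ℚ) ^ j * tq ^ (-(rho2 n N j)))))
        = (-1 : RatFunc ℚ)^(a + n*(N+1)*(c+1) + i) *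
            (tq ^ (-(rho2 n N i)) * ∏ j ∈ I, ((-1 : RatFunc ℚ) ^ j * tq ^ (-(rho2 n N j)))) := by
          rw [pow_add, pow_add]; ring
      _ = (-1 : RatFunc ℚ)^(N*n + b + n*(N+1)*c) *
            (tq ^ (-(rho2 n N i)) * ∏ j ∈ I, ((-1 : RatFunc ℚ) ^ j * tq ^ (-(rho2 n N j)))) := by
          rw [key]
      _ = _ := by rw [pow_add, pow_add]; ring
  · have h2 : insert i J ≠ Finset.Icc 1 n \ I := by
      intro h2
      apply h
      have : J = (insert i J).erase i := by
        rw [Finset.erase_insert hiJ]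
      rw [this, h2]
      ext x
      simp only [Finset.mem_erase, Finset.mem_sdiff, Finset.mem_insert]
      tauto
    rw [PhiS, if_neg h, PhiS, if_neg h2]
    ring
end

section
/- With the operators ψ_i, ψ_i^† on the free module M with basis {x_I : I ⊆ {1,…,n}} defined by ψ_i^† x_I = 0 if i ∈ I, ψ_i^† x_I = q^{-ρ_i}(-q)^{|{j∈I:j>i}|} x_{I∪{i}} if i ∉ I, and ψ_i x_I = q^{ρ_i}(-q)^{|{j∈I:j>i}|} x_{I∖{i}} if i ∈ I, ψ_i x_I = 0 otherwise, one has for every 1 ≤ i ≤ n the operator identity ψ_i ψ_i^† + ψ_i^† ψ_i = (q² - 1) ∑_{j>i} ψ_j^† ψ_j + 1 (as linear operators on M). -/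
/-- The ground field `ℚ(q^{1/2})`. -/
noncomputable abbrev KS : Type := RatFunc ℚ

/-- `qh` represents `q^{1/2}`, the generator of `ℚ(q^{1/2})`. -/
noncomputable def qh : KS := RatFunc.X

/-- The quantum parameter `q = (q^{1/2})²`. -/
noncomputable def qq : KS := qh ^ 2

/-- The quantum Clifford annihilation operator `ψ_i` on the free module with basis
`{x_I : I ⊆ {1,…,n}}`: `ψ_i x_I = c_i (-q)^{|{j∈I : j>i}|} x_{I∖{i}}` if `i ∈ I`, else `0`.
Here the unit `c i` plays the role of the scalar `q^{ρ_i}` (whose exponent `ρ_i`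
is a fixed rational number). -/
noncomputable def psiOp (n : ℕ) (c : Fin n → KSˣ) (i : Fin n) :
    (Finset (Fin n) →₀ KS) →ₗ[KS] (Finset (Fin n) →₀ KS) :=
  Finsupp.lift (Finset (Fin n) →₀ KS) KS (Finset (Fin n)) fun I =>
    if i ∈ I then
      ((c i : KS) * (-qq) ^ (I.filter (fun j => i < j)).card) •
        Finsupp.single (I.erase i) (1 : KS)
    else 0

/-- The quantum Clifford creation operator `ψ_i^†`:
`ψ_i^† x_I = c_i⁻¹ (-q)^{|{j∈I : j>i}|} x_{I∪{i}}` if `i ∉ I`, else `0`, where the unit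
`c i` plays the role of `q^{ρ_i}` (so `c i⁻¹` is `q^{-ρ_i}`). -/
noncomputable def psiDagOp (n : ℕ) (c : Fin n → KSˣ) (i : Fin n) :
    (Finset (Fin n) →₀ KS) →ₗ[KS] (Finset (Fin n) →₀ KS) :=
  Finsupp.lift (Finset (Fin n) →₀ KS) KS (Finset (Fin n)) fun I =>
    if i ∈ I then 0
    else
      (((c i : KS))⁻¹ * (-qq) ^ (I.filter (fun j => i < j)).card) •
        Finsupp.single (insert i I) (1 : KS)

lemma psiOp_single (n : ℕ) (c : Fin n → KSˣ) (i : Fin n) (I : Finset (Fin n)) :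
    psiOp n c i (Finsupp.single I 1) =
      if i ∈ I then
        ((c i : KS) * (-qq) ^ (I.filter (fun j => i < j)).card) •
          Finsupp.single (I.erase i) (1 : KS)
      else 0 := by
  simp [psiOp, Finsupp.lift_apply, Finsupp.sum_single_index]

lemma psiDagOp_single (n : ℕ) (c : Fin n → KSˣ) (i : Fin n) (I : Finset (Fin n)) :
    psiDagOp n c i (Finsupp.single I 1) =
      if i ∈ I then 0 else
        (((c i : KS))⁻¹ * (-qq) ^ (I.filter (fun j => i < j)).card) •
          Finsupp.single (insert i I) (1 : KS) := by
  simp [psiDagOp, Finsupp.lift_apply, Finsupp.sum_single_index]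

lemma dagmul_single (n : ℕ) (c : Fin n → KSˣ) (j : Fin n) (I : Finset (Fin n)) :
    (psiDagOp n c j ∘ₗ psiOp n c j) (Finsupp.single I 1) =
      if j ∈ I then (qq ^ 2) ^ (I.filter (fun k => j < k)).card • Finsupp.single I 1
      else 0 := by
  rw [LinearMap.comp_apply, psiOp_single]
  by_cases hj : j ∈ I
  · simp only [hj, if_true, map_smul, psiDagOp_single]
    have h1 : j ∉ I.erase j := Finset.notMem_erase _ _
    have h2 : (I.erase j).filter (fun k => j < k) = I.filter (fun k => j < k) := by
      ext k
      simp only [Finset.mem_filter, Finset.mem_erase]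
      constructor
      · rintro ⟨⟨_, hk⟩, hl⟩; exact ⟨hk, hl⟩
      · rintro ⟨hk, hl⟩; exact ⟨⟨ne_of_gt hl, hk⟩, hl⟩
    simp only [h1, if_false, h2, Finset.insert_erase hj, smul_smul]
    congr 1
    rw [mul_mul_mul_comm]
    rw [mul_inv_cancel₀ (Units.ne_zero (c j)), one_mul, ← pow_add, ← two_mul,
      pow_mul, neg_sq]
  · simp [hj]


lemma anticomm_single (n : ℕ) (c : Fin n → KSˣ) (i : Fin n) (I : Finset (Fin n)) :
    (psiOp n c i ∘ₗ psiDagOp n c i + psiDagOp n c i ∘ₗ psiOp n c i) (Finsupp.single I 1) =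
      (qq ^ 2) ^ (I.filter (fun k => i < k)).card • Finsupp.single I 1 := by
  rw [LinearMap.add_apply, LinearMap.comp_apply, LinearMap.comp_apply,
    psiOp_single, psiDagOp_single]
  by_cases hi : i ∈ I
  · simp only [hi, if_true, map_zero, map_smul, zero_add, psiDagOp_single]
    have h1 : i ∉ I.erase i := Finset.notMem_erase _ _
    have h2 : (I.erase i).filter (fun k => i < k) = I.filter (fun k => i < k) := by
      ext k
      simp only [Finset.mem_filter, Finset.mem_erase]
      exact ⟨fun ⟨⟨_, hk⟩, hl⟩ => ⟨hk, hl⟩, fun ⟨hk, hl⟩ => ⟨⟨ne_of_gt hl, hk⟩, hl⟩⟩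
    simp only [h1, if_false, h2, Finset.insert_erase hi, smul_smul]
    congr 1
    rw [mul_mul_mul_comm, mul_inv_cancel₀ (Units.ne_zero (c i)), one_mul, ← pow_add,
      ← two_mul, pow_mul, neg_sq]
  · simp only [hi, if_false, map_zero, add_zero, map_smul, psiOp_single,
      Finset.mem_insert_self, if_true]
    have h2 : (insert i I).filter (fun k => i < k) = I.filter (fun k => i < k) := by
      ext k
      simp only [Finset.mem_filter, Finset.mem_insert]
      constructor
      · rintro ⟨hk | hk, hl⟩
        · exact absurd hl (by simp [hk])
        · exact ⟨hk, hl⟩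
      · rintro ⟨hk, hl⟩; exact ⟨Or.inr hk, hl⟩
    rw [h2, Finset.erase_insert hi, smul_smul]
    congr 1
    rw [mul_mul_mul_comm, inv_mul_cancel₀ (Units.ne_zero (c i)), one_mul, ← pow_add,
      ← two_mul, pow_mul, neg_sq]

lemma aux_sum {α : Type*} [LinearOrder α] [DecidableEq α] {R : Type*} [CommRing R]
    (x : R) (S : Finset α) :
    ∑ j ∈ S, x ^ (S.filter (fun k => j < k)).card =
      ∑ t ∈ Finset.range S.card, x ^ t := by
  induction S using Finset.strongInduction with
  | _ S ih =>
    rcases S.eq_empty_or_nonempty with rfl | hS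
    · simp
    · set a := S.min' hS with ha
      have haS : a ∈ S := S.min'_mem hS
      have key : ∀ j ∈ S.erase a, (S.filter (fun k => j < k)).card =
          ((S.erase a).filter (fun k => j < k)).card := by
        intro j hj
        congr 1
        ext k
        simp only [Finset.mem_filter, Finset.mem_erase]
        constructor
        · rintro ⟨hk, hl⟩
          refine ⟨⟨?_, hk⟩, hl⟩
          rintro rfl
          exact absurd (S.min'_le j (Finset.mem_of_mem_erase hj)) (not_le_of_gt hl)
        · rintro ⟨⟨_, hk⟩, hl⟩; exact ⟨hk, hl⟩
      have hfa : (S.filter (fun k => a < k)).card = S.card - 1 := by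
        have : S.filter (fun k => a < k) = S.erase a := by
          ext k
          simp only [Finset.mem_filter, Finset.mem_erase]
          constructor
          · rintro ⟨hk, hl⟩; exact ⟨ne_of_gt hl, hk⟩
          · rintro ⟨hk, hl⟩
            exact ⟨hl, lt_of_le_of_ne (S.min'_le k hl) (Ne.symm hk)⟩
        rw [this, Finset.card_erase_of_mem haS]
      have hrec := ih (S.erase a) (Finset.erase_ssubset haS)
      rw [← Finset.sum_erase_add S _ haS, hfa,
        Finset.sum_congr rfl (fun j hj => by rw [key j hj]), hrec,
        Finset.card_erase_of_mem haS]
      have hpos : S.card = (S.card - 1) + 1 :=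
        (Nat.succ_pred_eq_of_pos (Finset.card_pos.mpr hS)).symm
      conv_rhs => rw [hpos, Finset.sum_range_succ]

/-- The quantum Clifford anticommutation relation:
`ψ_i ψ_i^† + ψ_i^† ψ_i = (q² - 1) ∑_{j>i} ψ_j^† ψ_j + 1` as operators on the spin module. -/
theorem quantum_clifford_anticommutator (n : ℕ) (c : Fin n → KSˣ) (i : Fin n) :
    psiOp n c i ∘ₗ psiDagOp n c i + psiDagOp n c i ∘ₗ psiOp n c i =
      (qq ^ 2 - 1) • (∑ j ∈ Finset.Ioi i, psiDagOp n c j ∘ₗ psiOp n c j) + LinearMap.id := by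
  refine Finsupp.lhom_ext fun I b => ?_
  have hb : Finsupp.single I b = b • Finsupp.single I (1 : KS) := by
    rw [Finsupp.smul_single, smul_eq_mul, mul_one]
  rw [hb, map_smul, map_smul]
  congr 1
  rw [anticomm_single, LinearMap.add_apply, LinearMap.smul_apply, LinearMap.sum_apply,
    LinearMap.id_apply]
  set S := I.filter (fun k => i < k) with hS
  have hsum : ∑ j ∈ Finset.Ioi i, (psiDagOp n c j ∘ₗ psiOp n c j) (Finsupp.single I 1) =
      (∑ j ∈ S, (qq ^ 2) ^ (S.filter (fun k => j < k)).card) • Finsupp.single I (1 : KS) := by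
    rw [Finset.sum_smul]
    rw [show S = (Finset.Ioi i).filter (fun j => j ∈ I) by
      ext k; simp [hS, Finset.mem_filter, and_comm]]
    rw [Finset.sum_filter]
    refine Finset.sum_congr rfl fun j hj => ?_
    rw [dagmul_single]
    by_cases hjI : j ∈ I
    · simp only [hjI, if_true]
      have hij : i < j := Finset.mem_Ioi.mp hj
      congr 3
      ext k
      simp only [Finset.mem_filter, Finset.mem_Ioi]
      constructor
      · rintro h
        first
          | exact ⟨⟨hij.trans h.2, h.1⟩, h.2⟩
          | exact ⟨h.1.2, h.2⟩
      · rintro h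
        first
          | exact ⟨⟨hij.trans h.2, h.1⟩, h.2⟩
          | exact ⟨h.1.2, h.2⟩
    · simp [hjI]
  rw [hsum, aux_sum, smul_smul]
  have hv : ((qq ^ 2 - 1) * ∑ t ∈ Finset.range S.card, (qq ^ 2) ^ t) •
        Finsupp.single I (1 : KS) + Finsupp.single I (1 : KS) =
      ((qq ^ 2 - 1) * ∑ t ∈ Finset.range S.card, (qq ^ 2) ^ t + 1) •
        Finsupp.single I (1 : KS) := by
    rw [add_smul, one_smul]
  rw [hv]
  congr 1
  have h := geom_sum_mul (qq ^ 2) S.card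
  linear_combination -h
end
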